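/- If P and P' are nonempty smooth properties and P has suffix of choice into P', then both a(P) ≥ a(P') and b(P) ≥ b(P'), where a(·), b(·) are the LR- and RL-sizes. -/

import Mathlib

/-- A two-way deterministic finite automaton: `step q a = (q', d)` where `d = true`
means the head moves right and `d = false` means it moves left. -/
structure TDFA (Q A : Type) where
  step : Q → A → Q × Bool
  start : Q
  accept : Q

namespace TDFA

variable {Q A : Type}

/-- One step of `M` on string `w`. A configuration is a pair (state, position),
with positions `1, …, w.length` on the symbols of `w`, position `0` meaning the
computation has fallen off the left end and `w.length + 1` off the right end. -/
def Step (M : TDFA Q A) (w : List A) (c c' : Q × ℕ) : Prop :=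
  ∃ a, w[c.2 - 1]? = some a ∧ 1 ≤ c.2 ∧
    c' = ((M.step c.1 a).1, if (M.step c.1 a).2 then c.2 + 1 else c.2 - 1)

/-- The computation of `M` on `w` started in state `p` at position `j`
hits right into state `q`. -/
def ReachesRight (M : TDFA Q A) (w : List A) (p : Q) (j : ℕ) (q : Q) : Prop :=
  Relation.ReflTransGen (M.Step w) (p, j) (q, w.length + 1)

/-- The computation of `M` on `w` started in state `p` at position `j`
hits left into state `q`. -/
def ReachesLeft (M : TDFA Q A) (w : List A) (p : Q) (j : ℕ) (q : Q) : Prop :=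
  Relation.ReflTransGen (M.Step w) (p, j) (q, 0)

/-- `Q_LR(w)`: states hit right by left computations of `M` on `w`. -/
def QLR (M : TDFA Q A) (w : List A) : Set Q := {q | ∃ p, M.ReachesRight w p 1 q}

/-- `Q_RL(w)`: states hit left by right computations of `M` on `w`. -/
def QRL (M : TDFA Q A) (w : List A) : Set Q := {q | ∃ p, M.ReachesLeft w p w.length q}

end TDFA

/-- `P` is smooth: any two of its strings admit a connecting infix in `P`. -/
def SmoothProp {A : Type} (P : Set (List A)) : Prop :=
  ∀ x ∈ P, ∀ z ∈ P, ∃ y : List A, x ++ y ++ z ∈ P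

/-- `y` is LR-generic for `P`. -/
def LRGeneric {Q A : Type} (M : TDFA Q A) (P : Set (List A)) (y : List A) : Prop :=
  y ∈ P ∧ ∀ z : List A, y ++ z ∈ P → (M.QLR y).ncard = (M.QLR (y ++ z)).ncard

/-- `y` is RL-generic for `P`. -/
def RLGeneric {Q A : Type} (M : TDFA Q A) (P : Set (List A)) (y : List A) : Prop :=
  y ∈ P ∧ ∀ z : List A, z ++ y ∈ P → (M.QRL y).ncard = (M.QRL (z ++ y)).ncard

section Aux

variable {Q A : Type}

lemma step_pos {M : TDFA Q A} {w : List A} {c c' : Q × ℕ} (h : M.Step w c c') :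
    1 ≤ c.2 ∧ (c'.2 = c.2 + 1 ∨ c'.2 = c.2 - 1) := by
  obtain ⟨a, _, h1, h2⟩ := h
  subst h2
  refine ⟨h1, ?_⟩
  rcases Bool.eq_false_or_eq_true (M.step c.1 a).2 with hb | hb <;> simp [hb]

lemma step_append_low {M : TDFA Q A} {v w : List A} {c c' : Q × ℕ}
    (h : M.Step (v ++ w) c c') (hc : c.2 ≤ v.length) : M.Step v c c' := by
  obtain ⟨a, hget, h1, h2⟩ := h
  refine ⟨a, ?_, h1, h2⟩
  have h3 : (v ++ w)[c.2 - 1]? = v[c.2 - 1]? := List.getElem?_append_left (by omega)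
  rw [← hget]
  exact h3.symm

lemma step_append_high {M : TDFA Q A} {z w : List A} {c c' : Q × ℕ}
    (h : M.Step (z ++ w) c c') (hc : z.length + 1 ≤ c.2) :
    M.Step w (c.1, c.2 - z.length) (c'.1, c'.2 - z.length) := by
  obtain ⟨a, hget, h1, h2⟩ := h
  refine ⟨a, ?_, by omega, ?_⟩
  · have : c.2 - z.length - 1 = c.2 - 1 - z.length := by omega
    have h3 : (z ++ w)[c.2 - 1]? = w[c.2 - 1 - z.length]? :=
      List.getElem?_append_right (by omega)
    rw [this, ← h3]
    exact hget
  · subst h2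
    rcases Bool.eq_false_or_eq_true (M.step c.1 a).2 with hb | hb <;>
      simp [hb] <;> omega

lemma rl_main (M : TDFA Q A) (v w : List A) (q : Q) :
    ∀ c : Q × ℕ, Relation.ReflTransGen (M.Step (v ++ w)) c (q, 0) →
      (c.2 ≤ v.length → Relation.ReflTransGen (M.Step v) c (q, 0) ∨ q ∈ M.QRL v) ∧
      (v.length ≤ c.2 → q ∈ M.QRL v) := by
  intro c h
  induction h using Relation.ReflTransGen.head_induction_on with
  | refl =>
      constructor
      · intro _
        exact Or.inl Relation.ReflTransGen.refl
      · intro hle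
        have hv : v.length = 0 := Nat.le_zero.mp hle
        exact ⟨q, by rw [hv]; exact Relation.ReflTransGen.refl⟩
  | head hstep hrest ih =>
      rename_i cs c₁
      obtain ⟨ha1, hpm⟩ := step_pos hstep
      constructor
      · intro hc
        have hs : M.Step v cs c₁ := step_append_low hstep hc
        by_cases hc₁ : c₁.2 ≤ v.length
        · rcases (ih.1 hc₁) with h' | h'
          · exact Or.inl (Relation.ReflTransGen.head hs h')
          · exact Or.inr h'
        · exact Or.inr (ih.2 (by omega))
      · intro hc
        by_cases hc₁ : v.length ≤ c₁.2
        · exact ih.2 hc₁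
        · -- c₁.2 < v.length ≤ a.2, step is ±1, so a.2 = v.length
          have ha2 : cs.2 = v.length := by omega
          have hs : M.Step v cs c₁ := step_append_low hstep (le_of_eq ha2)
          rcases (ih.1 (by omega)) with h' | h'
          · refine ⟨cs.1, ?_⟩
            show Relation.ReflTransGen (M.Step v) (cs.1, v.length) (q, 0)
            have he : (cs.1, v.length) = cs := by rw [← ha2]
            rw [he]
            exact Relation.ReflTransGen.head hs h'
          · exact h'

lemma lr_main (M : TDFA Q A) (z w : List A) (q : Q) :
    ∀ c : Q × ℕ, Relation.ReflTransGen (M.Step (z ++ w)) c (q, z.length + w.length + 1) →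
      (z.length + 1 ≤ c.2 →
        Relation.ReflTransGen (M.Step w) (c.1, c.2 - z.length) (q, w.length + 1) ∨
          q ∈ M.QLR w) ∧
      (c.2 ≤ z.length + 1 → q ∈ M.QLR w) := by
  intro c h
  induction h using Relation.ReflTransGen.head_induction_on with
  | refl =>
      constructor
      · intro _
        have hz : z.length + w.length + 1 - z.length = w.length + 1 := by omega
        rw [hz]
        exact Or.inl Relation.ReflTransGen.refl
      · intro hle
        have hw : w.length = 0 := by omega
        refine ⟨q, ?_⟩
        show Relation.ReflTransGen (M.Step w) (q, 1) (q, w.length + 1)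
        rw [hw]
  | head hstep hrest ih =>
      rename_i cs c₁
      obtain ⟨ha1, hpm⟩ := step_pos hstep
      constructor
      · intro hc
        have hs := step_append_high hstep hc
        by_cases hc₁ : z.length + 1 ≤ c₁.2
        · rcases (ih.1 hc₁) with h' | h'
          · exact Or.inl (Relation.ReflTransGen.head hs h')
          · exact Or.inr h'
        · exact Or.inr (ih.2 (by omega))
      · intro hc
        by_cases hc₁ : c₁.2 ≤ z.length + 1
        · exact ih.2 hc₁
        · -- a.2 = z.length + 1, c₁.2 = z.length + 2
          have ha2 : cs.2 = z.length + 1 := by omega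
          have hs := step_append_high hstep (le_of_eq ha2.symm)
          rcases (ih.1 (by omega)) with h' | h'
          · refine ⟨cs.1, ?_⟩
            show Relation.ReflTransGen (M.Step w) (cs.1, 1) (q, w.length + 1)
            have he : cs.2 - z.length = 1 := by omega
            have h2 : Relation.ReflTransGen (M.Step w) (cs.1, cs.2 - z.length)
                (q, w.length + 1) := Relation.ReflTransGen.head hs h'
            rwa [he] at h2
          · exact h'

lemma qrl_append_subset (M : TDFA Q A) (v w : List A) :
    M.QRL (v ++ w) ⊆ M.QRL v := by
  rintro q ⟨p, h⟩
  have h' : Relation.ReflTransGen (M.Step (v ++ w)) (p, (v ++ w).length) (q, 0) := h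
  exact (rl_main M v w q _ h').2 (by simp [List.length_append])

lemma qlr_append_subset (M : TDFA Q A) (z w : List A) :
    M.QLR (z ++ w) ⊆ M.QLR w := by
  rintro q ⟨p, h⟩
  have h' : Relation.ReflTransGen (M.Step (z ++ w)) (p, 1)
      (q, z.length + w.length + 1) := by
    have hl : (z ++ w).length + 1 = z.length + w.length + 1 := by
      simp [List.length_append]
    rw [← hl]
    exact h
  exact (lr_main M z w q _ h').2 (by omega)

end Aux

/-- If smooth nonempty `P` has suffix of choice into smooth nonempty `P'`, then
`a(P) ≥ a(P')` and `b(P) ≥ b(P')`, stated via arbitrary LR-generic strings `g, g'`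
and RL-generic strings `r, r'` of `P` and `P'` respectively. -/
theorem sizes_monotone_under_suffix_of_choice {Q A : Type} [Fintype Q] (M : TDFA Q A)
    (P P' : Set (List A)) (hP : P.Nonempty) (hP' : P'.Nonempty)
    (hsm : SmoothProp P) (hsm' : SmoothProp P')
    (hsoc : ∀ v ∈ P, ∃ u : List A, ∀ x ∈ P ∪ P', x ++ u ++ v ∈ P')
    (g g' r r' : List A)
    (hg : LRGeneric M P g) (hg' : LRGeneric M P' g')
    (hr : RLGeneric M P r) (hr' : RLGeneric M P' r') :
    (M.QLR g).ncard ≥ (M.QLR g').ncard ∧ (M.QRL r).ncard ≥ (M.QRL r').ncard := by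
  constructor
  · obtain ⟨u, hu⟩ := hsoc g hg.1
    have h1 : g' ++ (u ++ g) ∈ P' := by
      have := hu g' (Or.inr hg'.1)
      simpa [List.append_assoc] using this
    have h2 := hg'.2 (u ++ g) h1
    rw [h2]
    have hsub : M.QLR (g' ++ (u ++ g)) ⊆ M.QLR g := by
      have he : g' ++ (u ++ g) = (g' ++ u) ++ g := by simp [List.append_assoc]
      rw [he]
      exact qlr_append_subset M (g' ++ u) g
    exact Set.ncard_le_ncard hsub (Set.toFinite _)
  · obtain ⟨u, hu⟩ := hsoc r hr.1
    have hw0 : r ++ u ++ r ∈ P' := hu r (Or.inl hr.1)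
    obtain ⟨y, hy⟩ := hsm' _ hw0 r' hr'.1
    have h1 : ((r ++ u ++ r) ++ y) ++ r' ∈ P' := by
      simpa [List.append_assoc] using hy
    have h2 := hr'.2 ((r ++ u ++ r) ++ y) h1
    rw [h2]
    have hsub : M.QRL (((r ++ u ++ r) ++ y) ++ r') ⊆ M.QRL r := by
      have he : ((r ++ u ++ r) ++ y) ++ r' = r ++ (u ++ r ++ y ++ r') := by
        simp [List.append_assoc]
      rw [he]
      exact qrl_append_subset M r (u ++ r ++ y ++ r')
    exact Set.ncard_le_ncard hsub (Set.toFinite _)
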